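/- Let φ : (0,1] → ℝ be continuous and monotone, and (λ_n) be positive reals with Λ_n → ∞ and λ_n/Λ_n → η for some η ∈ (0,1). Then lim_{n→∞} ∑_{k=1}^n (λ_k/Λ_n) · φ(Λ_k/Λ_n) = ∑_{k=0}^∞ η(1−η)^k φ((1−η)^k), with the convention that both sides can be infinite simultaneously. -/

import Mathlib

open Filter MeasureTheory
open scoped ENNReal

noncomputable def auxT (w S : ℕ → ℝ) (φ : ℝ → ℝ) (n k : ℕ) : ℝ≥0∞ :=
  ENNReal.ofReal ((w k / S n) * φ (S k / S n))

noncomputable def auxL (η : ℝ) (φ : ℝ → ℝ) (j : ℕ) : ℝ≥0∞ :=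
  ENNReal.ofReal (η * (1 - η) ^ j * φ ((1 - η) ^ j))

noncomputable def auxI (φ : ℝ → ℝ) (a : ℝ) : ℝ≥0∞ :=
  ∫⁻ x in Set.Ioc (0:ℝ) a, ENNReal.ofReal (φ x)

lemma aux_cover {r : ℝ} (hr0 : 0 < r) (hr1 : r < 1) (m : ℕ) :
    Set.Ioc (0:ℝ) (r ^ m) ⊆ ⋃ j : ℕ, Set.Ioc (r ^ (m + j + 1)) (r ^ (m + j)) := by
  intro x hx
  have hex : ∃ j, r ^ (m + j + 1) < x := by
    obtain ⟨n, hn⟩ := exists_pow_lt_of_lt_one hx.1 hr1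
    exact ⟨n, lt_of_le_of_lt (pow_le_pow_of_le_one hr0.le hr1.le (by omega)) hn⟩
  classical
  set j := Nat.find hex with hj
  refine Set.mem_iUnion.2 ⟨j, Nat.find_spec hex, ?_⟩
  rcases Nat.eq_zero_or_pos j with h0 | h0
  · rw [h0]; simpa using hx.2
  · have := Nat.find_min hex (show j - 1 < j by omega)
    push_neg at this
    have h1 : x ≤ r ^ (m + (j - 1) + 1) := this
    calc x ≤ r ^ (m + (j - 1) + 1) := h1
      _ = r ^ (m + j) := by congr 1; omega

lemma aux_ratio (S : ℕ → ℝ) (hSpos : ∀ n, 0 < S n) (η : ℝ)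
    (hprev : Tendsto (fun n => S (n - 1) / S n) atTop (nhds (1 - η))) :
    ∀ j : ℕ, Tendsto (fun n => S (n - j) / S n) atTop (nhds ((1 - η) ^ j)) := by
  intro j
  induction j with
  | zero =>
    simp only [Nat.sub_zero, pow_zero]
    exact tendsto_const_nhds.congr (fun n => (div_self (hSpos n).ne').symm)
  | succ j ih =>
    have h1 : Tendsto (fun n => S (n - j - 1) / S (n - j)) atTop (nhds (1 - η)) :=
      hprev.comp (tendsto_sub_atTop_nat j)
    have h2 := h1.mul ih
    have heq : ∀ᶠ n in atTop, (S (n - j - 1) / S (n - j)) * (S (n - j) / S n)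
        = S (n - (j + 1)) / S n := by
      filter_upwards [eventually_ge_atTop (j + 1)] with n hn
      rw [div_mul_div_cancel₀ (hSpos (n - j)).ne', Nat.sub_sub]
    have h3 : Tendsto (fun n => S (n - (j + 1)) / S n) atTop
        (nhds ((1 - η) * (1 - η) ^ j)) := h2.congr' heq
    simpa [pow_succ, mul_comm] using h3

lemma auxI_add (φ : ℝ → ℝ) {a b : ℝ} (ha : 0 ≤ a) (hab : a ≤ b) :
    auxI φ b = auxI φ a + ∫⁻ x in Set.Ioc a b, ENNReal.ofReal (φ x) := by
  unfold auxI
  rw [← Set.Ioc_union_Ioc_eq_Ioc ha hab,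
    Measure.restrict_union (Set.Ioc_disjoint_Ioc_of_le le_rfl) measurableSet_Ioc,
    lintegral_add_measure]

lemma auxI_ub {φ : ℝ → ℝ} (hmono : AntitoneOn φ (Set.Ioc 0 1)) {a b : ℝ}
    (ha : 0 < a) (hab : a ≤ b) (hb1 : b ≤ 1) :
    ∫⁻ x in Set.Ioc a b, ENNReal.ofReal (φ x)
      ≤ ENNReal.ofReal (φ a) * ENNReal.ofReal (b - a) := by
  calc ∫⁻ x in Set.Ioc a b, ENNReal.ofReal (φ x)
      ≤ ∫⁻ _x in Set.Ioc a b, ENNReal.ofReal (φ a) := by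
        refine lintegral_mono_ae ((ae_restrict_iff' measurableSet_Ioc).2
          (Eventually.of_forall fun x hx => ?_))
        exact ENNReal.ofReal_le_ofReal
          (hmono ⟨ha, hab.trans hb1⟩ ⟨ha.trans hx.1, hx.2.trans hb1⟩ hx.1.le)
    _ = ENNReal.ofReal (φ a) * volume (Set.Ioc a b) := setLIntegral_const _ _
    _ = _ := by rw [Real.volume_Ioc]

lemma auxI_lb {φ : ℝ → ℝ} (hmono : AntitoneOn φ (Set.Ioc 0 1)) {a b : ℝ}
    (ha : 0 ≤ a) (hab : a ≤ b) (hb1 : b ≤ 1) (hb : 0 < b) :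
    ENNReal.ofReal (φ b) * ENNReal.ofReal (b - a)
      ≤ ∫⁻ x in Set.Ioc a b, ENNReal.ofReal (φ x) := by
  calc ENNReal.ofReal (φ b) * ENNReal.ofReal (b - a)
      = ∫⁻ _x in Set.Ioc a b, ENNReal.ofReal (φ b) := by
        rw [setLIntegral_const, Real.volume_Ioc]
    _ ≤ ∫⁻ x in Set.Ioc a b, ENNReal.ofReal (φ x) := by
        refine lintegral_mono_ae ((ae_restrict_iff' measurableSet_Ioc).2
          (Eventually.of_forall fun x hx => ?_))
        exact ENNReal.ofReal_le_ofReal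
          (hmono ⟨lt_of_le_of_lt ha hx.1, hx.2.trans hb1⟩ ⟨hb, hb1⟩ hx.2)

lemma auxI_tail {φ : ℝ → ℝ} {η : ℝ} (hmono : AntitoneOn φ (Set.Ioc 0 1))
    (hpos : ∀ x ∈ Set.Ioc (0:ℝ) 1, 0 ≤ φ x) (hη0 : 0 < η) (hη1 : η < 1) (m : ℕ) :
    auxI φ ((1 - η) ^ m) ≤ ENNReal.ofReal (1 - η)⁻¹ * ∑' j : ℕ, auxL η φ (m + j + 1) := by
  have hr0 : (0:ℝ) < 1 - η := by linarith
  have hr1 : (1:ℝ) - η < 1 := by linarith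
  calc auxI φ ((1 - η) ^ m)
      ≤ ∑' j : ℕ, ∫⁻ x in Set.Ioc ((1 - η) ^ (m + j + 1)) ((1 - η) ^ (m + j)),
          ENNReal.ofReal (φ x) :=
        le_trans (lintegral_mono_set (aux_cover hr0 hr1 m)) (lintegral_iUnion_le _ _)
    _ ≤ ∑' j : ℕ, ENNReal.ofReal (φ ((1 - η) ^ (m + j + 1)))
          * ENNReal.ofReal ((1 - η) ^ (m + j) - (1 - η) ^ (m + j + 1)) :=
        ENNReal.tsum_le_tsum fun j => auxI_ub hmono (pow_pos hr0 _)
          (pow_le_pow_of_le_one hr0.le hr1.le (by omega)) (pow_le_one₀ hr0.le hr1.le)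
    _ = ∑' j : ℕ, ENNReal.ofReal (1 - η)⁻¹ * auxL η φ (m + j + 1) := by
        refine tsum_congr fun j => ?_
        unfold auxL
        rw [← ENNReal.ofReal_mul (hpos _ ⟨pow_pos hr0 _, pow_le_one₀ hr0.le hr1.le⟩),
          ← ENNReal.ofReal_mul (by positivity)]
        congr 1
        have hne : (1:ℝ) - η ≠ 0 := hr0.ne'
        rw [pow_succ]
        field_simp
        ring
    _ = _ := ENNReal.tsum_mul_left

theorem stmt_4 (w : ℕ → ℝ) (hw : ∀ n, 0 < w n)
    (S : ℕ → ℝ) (hS : ∀ n, S n = ∑ i ∈ Finset.range (n + 1), w i)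
    (η : ℝ) (hη0 : 0 < η) (hη1 : η < 1)
    (h0 : Tendsto (fun n => w n / S n) atTop (nhds η))
    (htop : Tendsto S atTop atTop)
    (φ : ℝ → ℝ) (hcont : ContinuousOn φ (Set.Ioc 0 1))
    (hmono : AntitoneOn φ (Set.Ioc 0 1))
    (hpos : ∀ x ∈ Set.Ioc (0:ℝ) 1, 0 ≤ φ x) :
    Tendsto
      (fun n => ∑ k ∈ Finset.range (n + 1),
        ENNReal.ofReal ((w k / S n) * φ (S k / S n)))
      atTop
      (nhds (∑' k : ℕ, ENNReal.ofReal (η * (1 - η) ^ k * φ ((1 - η) ^ k)))) := by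
  classical
  show Tendsto (fun n => ∑ k ∈ Finset.range (n + 1), auxT w S φ n k) atTop
      (nhds (∑' k : ℕ, auxL η φ k))
  have hr0 : (0:ℝ) < 1 - η := by linarith
  have hr1 : (1:ℝ) - η < 1 := by linarith
  have hSpos : ∀ n, 0 < S n := fun n => by
    rw [hS]; exact Finset.sum_pos (fun i _ => hw i) Finset.nonempty_range_add_one
  have hstep : ∀ n, S (n + 1) = S n + w (n + 1) := fun n => by
    rw [hS, hS, Finset.sum_range_succ]
  have hSmono : Monotone S := monotone_nat_of_le_succ fun n => by
    rw [hstep]; linarith [hw (n + 1)]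
  have hS0 : S 0 = w 0 := by rw [hS]; simp
  have hmem : ∀ k n, k ≤ n → S k / S n ∈ Set.Ioc (0:ℝ) 1 := fun k n hkn =>
    ⟨div_pos (hSpos k) (hSpos n), (div_le_one (hSpos n)).2 (hSmono hkn)⟩
  have hprev : Tendsto (fun n => S (n - 1) / S n) atTop (nhds (1 - η)) := by
    refine (tendsto_const_nhds.sub h0).congr' ?_
    filter_upwards [eventually_ge_atTop 1] with n hn
    obtain ⟨m, rfl⟩ := Nat.exists_eq_add_of_le hn
    have hne := (hSpos (1 + m)).ne'
    have h := hstep m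
    rw [show 1 + m = m + 1 by omega] at *
    field_simp
    rw [Nat.add_sub_cancel]; linarith
  have hratio := aux_ratio S hSpos η hprev
  have hwS : ∀ j, Tendsto (fun n => w (n - j) / S n) atTop (nhds (η * (1 - η) ^ j)) := by
    intro j
    refine ((h0.comp (tendsto_sub_atTop_nat j)).mul (hratio j)).congr' ?_
    filter_upwards [eventually_ge_atTop j] with n hn
    exact div_mul_div_cancel₀ (hSpos (n - j)).ne' ..
  have hpowmem : ∀ j : ℕ, (1 - η) ^ j ∈ Set.Ioc (0:ℝ) 1 :=
    fun j => ⟨pow_pos hr0 j, pow_le_one₀ hr0.le hr1.le⟩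
  have hφconv : ∀ j, Tendsto (fun n => φ (S (n - j) / S n)) atTop
      (nhds (φ ((1 - η) ^ j))) := fun j =>
    (hcont _ (hpowmem j)).tendsto.comp
      (tendsto_nhdsWithin_iff.2 ⟨hratio j,
        Eventually.of_forall fun n => hmem _ _ (Nat.sub_le n j)⟩)
  have hTconv : ∀ j, Tendsto (fun n => auxT w S φ n (n - j)) atTop (nhds (auxL η φ j)) :=
    fun j => (ENNReal.continuous_ofReal.tendsto _).comp ((hwS j).mul (hφconv j))
  -- sum of initial terms bounded by integral
  have hsum_le : ∀ n K, K ≤ n →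
      ∑ k ∈ Finset.range (K + 1), auxT w S φ n k ≤ auxI φ (S K / S n) := by
    intro n K
    induction K with
    | zero =>
      intro _
      rw [Finset.sum_range_one]
      have hb := div_pos (hSpos 0) (hSpos n)
      have h := auxI_lb hmono le_rfl hb.le (hmem 0 n (Nat.zero_le n)).2 hb
      refine le_trans (le_of_eq ?_) h
      unfold auxT
      rw [← ENNReal.ofReal_mul (hpos _ (hmem 0 n (Nat.zero_le n)))]
      congr 1
      rw [sub_zero, ← hS0]
      ring
    | succ K ih =>
      intro hK
      have hK' : K ≤ n := Nat.le_of_succ_le hK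
      rw [Finset.sum_range_succ]
      have hpos1 : 0 < S K / S n := div_pos (hSpos K) (hSpos n)
      have hle : S K / S n ≤ S (K + 1) / S n := by
        gcongr
        · exact (hSpos n).le
        · exact hSmono (Nat.le_succ K)
      have hlb := auxI_lb hmono hpos1.le hle (hmem (K + 1) n hK).2
        (div_pos (hSpos (K + 1)) (hSpos n))
      have hTeq : auxT w S φ n (K + 1) = ENNReal.ofReal (φ (S (K + 1) / S n))
          * ENNReal.ofReal (S (K + 1) / S n - S K / S n) := by
        unfold auxT
        rw [← ENNReal.ofReal_mul (hpos _ (hmem (K + 1) n hK))]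
        congr 1
        rw [div_sub_div_same, hstep K, add_sub_cancel_left, mul_comm]
      calc ∑ k ∈ Finset.range (K + 1), auxT w S φ n k + auxT w S φ n (K + 1)
          ≤ auxI φ (S K / S n) + ∫⁻ x in Set.Ioc (S K / S n) (S (K + 1) / S n),
              ENNReal.ofReal (φ x) := add_le_add (ih hK') (hTeq ▸ hlb)
        _ = auxI φ (S (K + 1) / S n) := (auxI_add φ hpos1.le hle).symm
  -- liminf bound
  have hliminf : (∑' j : ℕ, auxL η φ j) ≤
      atTop.liminf (fun n => ∑ k ∈ Finset.range (n + 1), auxT w S φ n k) := by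
    refine le_of_tendsto' (ENNReal.tendsto_nat_tsum (auxL η φ)) fun m => ?_
    have hG : Tendsto (fun n => ∑ j ∈ Finset.range m, auxT w S φ n (n - j)) atTop
        (nhds (∑ j ∈ Finset.range m, auxL η φ j)) :=
      tendsto_finset_sum _ fun j _ => hTconv j
    rw [← hG.liminf_eq]
    refine liminf_le_liminf ?_
    filter_upwards [eventually_ge_atTop m] with n hn
    calc ∑ j ∈ Finset.range m, auxT w S φ n (n - j)
        = ∑ k ∈ (Finset.range m).image (fun j => n - j), auxT w S φ n k :=
          (Finset.sum_image (fun x hx y hy h => by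
            have hx' := Finset.mem_range.1 hx
            have hy' := Finset.mem_range.1 hy
            omega)).symm
      _ ≤ ∑ k ∈ Finset.range (n + 1), auxT w S φ n k := by
          refine Finset.sum_le_sum_of_subset ?_
          intro k hk
          simp only [Finset.mem_image, Finset.mem_range] at hk ⊢
          obtain ⟨j, hj, rfl⟩ := hk
          omega
  -- limsup bound
  have hlimsup : atTop.limsup (fun n => ∑ k ∈ Finset.range (n + 1), auxT w S φ n k)
      ≤ ∑' j : ℕ, auxL η φ j := by
    by_cases hfin : (∑' j : ℕ, auxL η φ j) = ⊤
    · rw [hfin]; exact le_top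
    have key : ∀ m : ℕ, 1 ≤ m →
        atTop.limsup (fun n => ∑ k ∈ Finset.range (n + 1), auxT w S φ n k)
          ≤ ENNReal.ofReal (1 - η)⁻¹ * (∑' j : ℕ, auxL η φ (j + m))
            + ∑ j ∈ Finset.range m, auxL η φ j := by
      intro m hm
      have hTop : Tendsto (fun n => ∑ j ∈ Finset.range m, auxT w S φ n (n - (m - 1 - j)))
          atTop (nhds (∑ j ∈ Finset.range m, auxL η φ j)) := by
        rw [← Finset.sum_range_reflect (auxL η φ) m]
        exact tendsto_finset_sum _ fun j _ => hTconv (m - 1 - j)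
      have hdecomp : ∀ n, m ≤ n →
          ∑ k ∈ Finset.range (n + 1), auxT w S φ n k
            ≤ auxI φ (S (n - m) / S n)
              + ∑ j ∈ Finset.range m, auxT w S φ n (n - (m - 1 - j)) := by
        intro n hn
        rw [← Finset.sum_range_add_sum_Ico _ (show n - m + 1 ≤ n + 1 by omega)]
        refine add_le_add (hsum_le n (n - m) (by omega)) (le_of_eq ?_)
        rw [Finset.sum_Ico_eq_sum_range, show (n + 1) - (n - m + 1) = m by omega]
        refine Finset.sum_congr rfl fun k hk => ?_
        have hk' := Finset.mem_range.1 hk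
        rw [show n - m + 1 + k = n - (m - 1 - k) by omega]
      have hIbound : ∀ᶠ n in atTop,
          auxI φ (S (n - m) / S n) ≤ auxI φ ((1 - η) ^ (m - 1)) := by
        have h2 : (1 - η) ^ m < (1 - η) ^ (m - 1) :=
          pow_lt_pow_right_of_lt_one₀ hr0 hr1 (by omega)
        filter_upwards [(hratio m).eventually_le_const h2] with n hn
        exact lintegral_mono_set (Set.Ioc_subset_Ioc_right hn)
      have hev : ∀ᶠ n in atTop,
          ∑ k ∈ Finset.range (n + 1), auxT w S φ n k
            ≤ auxI φ ((1 - η) ^ (m - 1))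
              + ∑ j ∈ Finset.range m, auxT w S φ n (n - (m - 1 - j)) := by
        filter_upwards [eventually_ge_atTop m, hIbound] with n hn hI
        exact le_trans (hdecomp n hn) (add_le_add_left hI _)
      calc atTop.limsup (fun n => ∑ k ∈ Finset.range (n + 1), auxT w S φ n k)
          ≤ atTop.limsup (fun n => auxI φ ((1 - η) ^ (m - 1))
              + ∑ j ∈ Finset.range m, auxT w S φ n (n - (m - 1 - j))) :=
            limsup_le_limsup hev
        _ = auxI φ ((1 - η) ^ (m - 1)) + ∑ j ∈ Finset.range m, auxL η φ j :=
            (tendsto_const_nhds.add hTop).limsup_eq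
        _ ≤ ENNReal.ofReal (1 - η)⁻¹ * (∑' j : ℕ, auxL η φ (j + m))
              + ∑ j ∈ Finset.range m, auxL η φ j := by
            refine add_le_add_left ?_ _
            refine le_trans (auxI_tail hmono hpos hη0 hη1 (m - 1)) (le_of_eq ?_)
            congr 1
            exact tsum_congr fun j => by rw [show m - 1 + j + 1 = j + m by omega]
    have hU : Tendsto (fun m => ENNReal.ofReal (1 - η)⁻¹ * (∑' j : ℕ, auxL η φ (j + m))
        + ∑ j ∈ Finset.range m, auxL η φ j) atTop (nhds (∑' j : ℕ, auxL η φ j)) := by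
      have h1 : Tendsto (fun m => ENNReal.ofReal (1 - η)⁻¹ * ∑' j : ℕ, auxL η φ (j + m))
          atTop (nhds (ENNReal.ofReal (1 - η)⁻¹ * 0)) :=
        ENNReal.Tendsto.const_mul (ENNReal.tendsto_sum_nat_add (auxL η φ) hfin)
          (Or.inr ENNReal.ofReal_ne_top)
      have h2 := h1.add (ENNReal.tendsto_nat_tsum (auxL η φ))
      simpa using h2
    exact ge_of_tendsto hU (eventually_atTop.2 ⟨1, fun m hm => key m hm⟩)
  exact tendsto_of_le_liminf_of_limsup_le hliminf hlimsup
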